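/- Let c, a₁, b₁, b₂, r₊, r₋ ∈ ℝ³ with ‖c‖ = ‖a₁‖ = ‖b₁‖ = ‖b₂‖ = ‖r₊‖ = ‖r₋‖ = 1, and let a₂ ∈ ℝ³ be a unit vector. Then the supremum over all such vectors of (1/2)(c·a₁)((b₁+b₂)·(r₊−r₋)) + a₂·(b₁−b₂) equals 2√2. -/

import Mathlib

open RealInnerProductSpace Real

lemma ub_aux (s t : ℝ) (hs : 0 ≤ s) (ht : 0 ≤ t) (h : s^2 + t^2 = 4) :
    s + t ≤ 2 * Real.sqrt 2 := by
  have h2 : (Real.sqrt 2)^2 = 2 := Real.sq_sqrt (by norm_num)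
  have h1 : (1:ℝ) ≤ Real.sqrt 2 := by
    nlinarith [Real.sqrt_nonneg 2]
  nlinarith [sq_nonneg (s - t), sq_nonneg (s + t - 2 * Real.sqrt 2)]

theorem stmt_6 :
    IsLUB {x : ℝ | ∃ c a₁ a₂ b₁ b₂ rp rm : EuclideanSpace ℝ (Fin 3),
        ‖c‖ = 1 ∧ ‖a₁‖ = 1 ∧ ‖a₂‖ = 1 ∧ ‖b₁‖ = 1 ∧ ‖b₂‖ = 1 ∧ ‖rp‖ = 1 ∧ ‖rm‖ = 1 ∧
        x = (1 / 2) * ⟪c, a₁⟫ * ⟪b₁ + b₂, rp - rm⟫ + ⟪a₂, b₁ - b₂⟫}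
      (2 * Real.sqrt 2) := by
  constructor
  · rintro x ⟨c, a₁, a₂, b₁, b₂, rp, rm, hc, ha₁, ha₂, hb₁, hb₂, hrp, hrm, rfl⟩
    have hA : |⟪c, a₁⟫| ≤ 1 := by
      have := abs_real_inner_le_norm c a₁
      rwa [hc, ha₁, one_mul] at this
    have hP : |⟪b₁ + b₂, rp - rm⟫| ≤ ‖b₁ + b₂‖ * 2 := by
      have h1 := abs_real_inner_le_norm (b₁ + b₂) (rp - rm)
      have h2 : ‖rp - rm‖ ≤ 2 := by
        calc ‖rp - rm‖ ≤ ‖rp‖ + ‖rm‖ := norm_sub_le _ _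
        _ = 2 := by rw [hrp, hrm]; norm_num
      calc |⟪b₁ + b₂, rp - rm⟫| ≤ ‖b₁ + b₂‖ * ‖rp - rm‖ := h1
      _ ≤ ‖b₁ + b₂‖ * 2 := by
          exact mul_le_mul_of_nonneg_left h2 (norm_nonneg _)
    have hQ : ⟪a₂, b₁ - b₂⟫ ≤ ‖b₁ - b₂‖ := by
      have := real_inner_le_norm a₂ (b₁ - b₂)
      rwa [ha₂, one_mul] at this
    have hpar : ‖b₁ + b₂‖^2 + ‖b₁ - b₂‖^2 = 4 := by
      have := parallelogram_law_with_norm ℝ b₁ b₂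
      rw [hb₁, hb₂] at this
      nlinarith [this]
    have key : ‖b₁ + b₂‖ + ‖b₁ - b₂‖ ≤ 2 * Real.sqrt 2 :=
      ub_aux _ _ (norm_nonneg _) (norm_nonneg _) hpar
    have h1 : (1 / 2) * ⟪c, a₁⟫ * ⟪b₁ + b₂, rp - rm⟫ ≤ ‖b₁ + b₂‖ := by
      calc (1 / 2) * ⟪c, a₁⟫ * ⟪b₁ + b₂, rp - rm⟫
          ≤ |(1 / 2) * ⟪c, a₁⟫ * ⟪b₁ + b₂, rp - rm⟫| := le_abs_self _
      _ = (1/2) * (|⟪c, a₁⟫| * |⟪b₁ + b₂, rp - rm⟫|) := by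
          rw [abs_mul, abs_mul]; norm_num [mul_assoc]
      _ ≤ (1/2) * (1 * (‖b₁ + b₂‖ * 2)) := by
          apply mul_le_mul_of_nonneg_left _ (by norm_num)
          exact mul_le_mul hA hP (abs_nonneg _) (by norm_num)
      _ = ‖b₁ + b₂‖ := by ring
    linarith
  · intro y hy
    apply hy
    set e : (Fin 3 → ℝ) → EuclideanSpace ℝ (Fin 3) := fun f => (WithLp.equiv 2 (Fin 3 → ℝ)).symm f with he
    set s := Real.sqrt 2
    have hs2 : s^2 = 2 := Real.sq_sqrt (by norm_num)
    have hs0 : 0 < s := Real.sqrt_pos.mpr (by norm_num)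
    refine ⟨(e ![1,0,0]), (e ![1,0,0]), (e ![0,1,0]), (e ![s/2, s/2, 0]), (e ![s/2, -(s/2), 0]),
      (e ![1,0,0]), (e ![-1,0,0]), ?_, ?_, ?_, ?_, ?_, ?_, ?_, ?_⟩
    all_goals
      simp only [EuclideanSpace.norm_eq, PiLp.inner_apply, PiLp.add_apply, PiLp.sub_apply,
        Fin.sum_univ_three, Matrix.cons_val_zero, Matrix.cons_val_one, Matrix.head_cons,
        Matrix.cons_val_two, Matrix.tail_cons, RCLike.inner_apply, conj_trivial, he, WithLp.equiv_symm_apply, PiLp.toLp_apply, Matrix.cons_val]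
    all_goals norm_num
    all_goals nlinarith [sq_abs s, hs2]
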